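/- Let A be a Lie triple algebra over a field of characteristic ≠ 2 with an idempotent e ≠ 0 and Peirce decomposition A = A_e(1) ⊕ A_e(1/2) ⊕ A_e(0). Then for every derivation d of A, d(e) ∈ A_e(1/2). -/
import Mathlib


/-- In a Lie triple algebra with nonzero idempotent e and Peirce decomposition
A = A_e(1) ⊕ A_e(1/2) ⊕ A_e(0), every derivation d satisfies d(e) ∈ A_e(1/2). -/
theorem deriv_idempotent_half {K A : Type*} [Field K] [NonUnitalNonAssocCommRing A]
    [Module K A] [SMulCommClass K A A] [IsScalarTower K A A]
    (h2 : (2 : K) ≠ 0)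
    (hLT : ∀ x y : A, 2 • (x * (x * (x * y))) + y * (x * (x * x)) = 3 • (x * (y * (x * x))))
    (e : A) (he : e ≠ 0) (hee : e * e = e)
    (hdecomp : ∀ x : A, ∃ x1 xh x0 : A,
      e * x1 = x1 ∧ e * xh = (2 : K)⁻¹ • xh ∧ e * x0 = 0 ∧ x = x1 + xh + x0)
    (d : A →ₗ[K] A) (hd : ∀ x y : A, d (x * y) = d x * y + x * d y) :
    e * d e = (2 : K)⁻¹ • d e := by
  have h : d e = e * d e + e * d e := by
    conv_lhs => rw [← hee, hd e e, mul_comm (d e) e]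
  calc e * d e = (2 : K)⁻¹ • ((2 : K) • (e * d e)) := by
        rw [smul_smul, inv_mul_cancel₀ h2, one_smul]
    _ = (2 : K)⁻¹ • d e := by rw [two_smul, ← h]
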